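/- There is a constant K such that for every odd u ∈ l²(ℤ;ℂ) (i.e. u(-x) = -u(x) for all x) with ‖u‖_{l²_1} ≤ 1, and every λ ∈ ℂ with Im λ ≠ 0, the resolvent satisfies ‖(-Δ_d - λ)^{-1} u‖_{l²_{-1}} ≤ K; i.e. the weighted resolvent bound sup_{Im λ ≠ 0} ‖(-Δ_d - λ)^{-1}‖_{l²_1 → l²_{-1}} < ∞ holds uniformly on odd functions. -/

import Mathlib

noncomputable section

open scoped BigOperators ENNReal
open MeasureTheory Complex Filter

/-! ## Sequence spaces and norms -/

/-- Square-summable complex sequences `ℓ²(ℤ;ℂ)`. -/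
abbrev L2 := lp (fun _ : ℤ => ℂ) 2
/-- Square-summable real sequences `ℓ²(ℤ;ℝ)`. -/
abbrev L2R := lp (fun _ : ℤ => ℝ) 2
/-- Bounded real sequences `ℓ^∞(ℕ₀;ℝ)`. -/
abbrev LinfN := lp (fun _ : ℕ => ℝ) ⊤

/-- Discrete Laplacian on raw complex sequences. -/
def lapC (u : ℤ → ℂ) : ℤ → ℂ := fun x => u (x + 1) - 2 * u x + u (x - 1)

/-- Discrete Laplacian on raw real sequences. -/
def lapR (u : ℤ → ℝ) : ℤ → ℝ := fun x => u (x + 1) - 2 * u x + u (x - 1)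

/-- Exponential weight `e^{a|x|}`. -/
def wt (a : ℝ) (x : ℤ) : ℝ := Real.exp (a * |(x : ℝ)|)

/-- `ℝ≥0∞`-valued weighted `ℓ²` norm `‖u‖_{l²_a} = ‖e^{a|·|}u‖_{l²}`. -/
def el2w (a : ℝ) (u : ℤ → ℂ) : ℝ≥0∞ :=
  (∑' x : ℤ, ((‖u x‖₊ : ℝ≥0∞) * ENNReal.ofReal (wt a x)) ^ (2 : ℕ)) ^ ((1 : ℝ) / 2)

/-- `ℝ≥0∞`-valued `ℓ²` norm. -/
def el2 (u : ℤ → ℂ) : ℝ≥0∞ := el2w 0 u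

/-- `ℝ≥0∞`-valued `ℓ¹` norm. -/
def el1 (u : ℤ → ℂ) : ℝ≥0∞ := ∑' x : ℤ, (‖u x‖₊ : ℝ≥0∞)

/-- `ℝ≥0∞`-valued `ℓ^∞` norm. -/
def elinf (u : ℤ → ℂ) : ℝ≥0∞ := ⨆ x : ℤ, (‖u x‖₊ : ℝ≥0∞)

/-- `L^q` norm in time over the set `I` of an `ℝ≥0∞`-valued function. -/
def LqT (q : ℝ) (I : Set ℝ) (F : ℝ → ℝ≥0∞) : ℝ≥0∞ := (∫⁻ t in I, F t ^ q) ^ (1 / q)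

/-- `L^∞` norm in time over the set `I` of an `ℝ≥0∞`-valued function. -/
def LinfT (I : Set ℝ) (F : ℝ → ℝ≥0∞) : ℝ≥0∞ := essSup F (volume.restrict I)

/-- The `Strichartz` norm `L^∞(I,l²) ∩ L⁶(I,l^∞)` of a time-dependent sequence. -/
def StzT (I : Set ℝ) (F : ℝ → ℤ → ℂ) : ℝ≥0∞ :=
  LinfT I (fun t => el2 (F t)) + LqT 6 I (fun t => elinf (F t))

/-- The `L¹ ∩ L^∞` norm in time of a scalar function. -/
def L1LinfT (I : Set ℝ) (g : ℝ → ℝ) : ℝ≥0∞ :=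
  LqT 1 I (fun t => (‖g t‖₊ : ℝ≥0∞)) + LinfT I (fun t => (‖g t‖₊ : ℝ≥0∞))

/-! ## The discrete Laplacian and its unitary group -/

lemma memℓp_translate (k : ℤ) (u : L2) : Memℓp (fun x : ℤ => u (x + k)) 2 := by
  apply memℓp_gen
  have hs : Summable fun x : ℤ => ‖u x‖ ^ (2 : ℝ≥0∞).toReal :=
    (memℓp_gen_iff (by norm_num)).1 (lp.memℓp u)
  exact ((Equiv.addRight k).summable_iff
    (f := fun x : ℤ => ‖u x‖ ^ (2 : ℝ≥0∞).toReal)).2 hs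

lemma norm_translate (k : ℤ) (u : L2) :
    ‖(⟨fun x : ℤ => u (x + k), memℓp_translate k u⟩ : L2)‖ = ‖u‖ := by
  rw [lp.norm_eq_tsum_rpow (by norm_num), lp.norm_eq_tsum_rpow (by norm_num)]
  congr 1
  exact (Equiv.addRight k).tsum_eq (f := fun x : ℤ => ‖u x‖ ^ (2 : ℝ≥0∞).toReal)

/-- Translation `u ↦ u(· + k)` as a linear map on `ℓ²(ℤ;ℂ)`. -/
def translateLM (k : ℤ) : L2 →ₗ[ℂ] L2 where
  toFun u := ⟨fun x => u (x + k), memℓp_translate k u⟩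
  map_add' u v := by ext x; simp [lp.coeFn_add]; rfl
  map_smul' c u := by ext x; simp [lp.coeFn_smul]

/-- Translation as a continuous linear map on `ℓ²(ℤ;ℂ)`. -/
def translateCLM (k : ℤ) : L2 →L[ℂ] L2 :=
  LinearMap.mkContinuous (translateLM k) 1 (by
    intro u; rw [one_mul]; exact le_of_eq (norm_translate k u))

/-- The discrete Laplacian `(Δ_d u)(x) = u(x+1) - 2u(x) + u(x-1)` as a bounded operator
on `ℓ²(ℤ;ℂ)`. -/
def DeltaD : L2 →L[ℂ] L2 :=
  translateCLM 1 + translateCLM (-1) - 2 • ContinuousLinearMap.id ℂ L2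

lemma DeltaD_apply (u : L2) (x : ℤ) :
    DeltaD u x = u (x + 1) - 2 * u x + u (x - 1) := by
  simp [DeltaD, translateCLM, translateLM, LinearMap.mkContinuous,
    lp.coeFn_add, lp.coeFn_sub, lp.coeFn_smul, sub_eq_add_neg]
  change u (x + 1) + u (x + -1) + -(2 * u x) = _
  ring

/-- The Kronecker delta at `0` as an element of `ℓ²(ℤ;ℂ)`. -/
def e0C : L2 := lp.single 2 (0 : ℤ) (1 : ℂ)

lemma norm_e0C : ‖e0C‖ = 1 := by
  have := lp.norm_single (p := 2) (E := fun _ : ℤ => ℂ) (by norm_num)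
    0 (1 : ℂ)
  simpa [e0C] using this

/-- The projection `P₀⊥ u = u - (u,δ₀)δ₀` as a bounded operator on `ℓ²(ℤ;ℂ)`. -/
def P0perp : L2 →L[ℂ] L2 :=
  LinearMap.mkContinuous
    { toFun := fun u => u - (u 0) • e0C
      map_add' := fun u v => by
        have h : (↑(u + v) : ∀ _ : ℤ, ℂ) 0 = u 0 + v 0 := by
          rw [lp.coeFn_add]; rfl
        show (u + v) - ((u + v : L2) 0) • e0C = (u - (u 0) • e0C) + (v - (v 0) • e0C)
        rw [h, add_smul]; abel
      map_smul' := fun c u => by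
        have h : (↑(c • u) : ∀ _ : ℤ, ℂ) 0 = c * u 0 := by
          rw [lp.coeFn_smul]; rfl
        show (c • u) - ((c • u : L2) 0) • e0C = (RingHom.id ℂ) c • (u - (u 0) • e0C)
        rw [h, RingHom.id_apply, mul_smul, ← smul_sub] }
    2 (by
      intro u
      have h2 : ‖u 0‖ ≤ ‖u‖ := lp.norm_apply_le_norm (by norm_num) u 0
      calc ‖u - (u 0) • e0C‖ ≤ ‖u‖ + ‖(u 0) • e0C‖ := norm_sub_le _ _
        _ = ‖u‖ + ‖u 0‖ * ‖e0C‖ := by rw [norm_smul]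
        _ ≤ 2 * ‖u‖ := by rw [norm_e0C]; linarith)

lemma P0perp_apply (u : L2) (x : ℤ) :
    P0perp u x = if x = 0 then 0 else u x := by
  have h : P0perp u = u - (u 0) • e0C := rfl
  rw [h, lp.coeFn_sub, lp.coeFn_smul]
  by_cases hx : x = 0 <;>
    simp [hx, e0C, lp.single_apply, Pi.sub_apply, Pi.smul_apply]

/-- `Δ₀ = P₀⊥ Δ_d P₀⊥`, the discrete Laplacian restricted to `P₀⊥ ℓ²`. -/
def Delta0 : L2 →L[ℂ] L2 := P0perp.comp (DeltaD.comp P0perp)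

/-- The unitary group `e^{itΔ_d}`. -/
def Ud (t : ℝ) : L2 →L[ℂ] L2 := NormedSpace.exp ((Complex.I * t) • DeltaD)

/-- The unitary group `e^{itΔ₀}`. -/
def U0 (t : ℝ) : L2 →L[ℂ] L2 := NormedSpace.exp ((Complex.I * t) • Delta0)

/-- Domination criterion for membership in `ℓ²`. -/
lemma memℓp_of_le (u : L2) (f : ℤ → ℂ) (h : ∀ x, ‖f x‖ ≤ ‖u x‖) : Memℓp f 2 := by
  apply memℓp_gen
  have hs : Summable fun x : ℤ => ‖u x‖ ^ (2 : ℝ≥0∞).toReal :=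
    (memℓp_gen_iff (by norm_num)).1 (lp.memℓp u)
  refine hs.of_nonneg_of_le (fun x => ?_) (fun x => ?_)
  · positivity
  · exact Real.rpow_le_rpow (norm_nonneg _) (h x) (by norm_num)

/-- The restriction `P₊` to `{x ≥ 1}`. -/
def Pplus (u : L2) : L2 :=
  ⟨fun x => if 1 ≤ x then u x else 0,
    memℓp_of_le u _ (fun x => by by_cases h : 1 ≤ x <;> simp [h])⟩

/-- The restriction `P₋` to `{x ≤ -1}`. -/
def Pminus (u : L2) : L2 :=
  ⟨fun x => if x ≤ -1 then u x else 0,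
    memℓp_of_le u _ (fun x => by by_cases h : x ≤ -1 <;> simp [h])⟩

/-- Duhamel term `∫₀ᵗ e^{i(t-s)Δ₀} P₀⊥ f(s) ds`. -/
def duhamel (f : ℝ → L2) (t : ℝ) : L2 := ∫ s in (0 : ℝ)..t, U0 (t - s) (P0perp (f s))

/-! ## Soliton families -/

/-- The Kronecker delta at `0` in `ℓ²(ℤ;ℝ)`. -/
def e0R : L2R := lp.single 2 (0 : ℤ) (1 : ℝ)

/-- `P₀⊥` on real `ℓ²`. -/
def P0R (u : L2R) : L2R := u - (u 0) • e0R

/-- A family of solitons `φ_ω`, `ω ∈ (ω₀,∞)`, as in Proposition 1.2 of the paper.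
The data is recorded through the weighted sequences `Φ ω = e^{10|·|} φ_ω ∈ ℓ²(ℤ;ℝ)`
(so that `φ_ω = e^{-10|·|} Φ ω`, the map `ω ↦ φ_ω` is twice continuously differentiable
into `l²_{10}` iff `ω ↦ Φ ω` is so into `ℓ²`, and `l²_{10}`-norm statements about `φ_ω`
are plain `ℓ²`-norm statements about `Φ ω`), together with its first and second
derivatives in `ω`.  The fields state: `ω ↦ φ_ω` is `C²` from `(ω₀,∞)` to `l²_{10}`;
`φ_ω` solves `0 = -Δ_d φ_ω + ω φ_ω - |φ_ω|⁶ φ_ω`; and the two weighted estimates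
`∑_{j=0}^{2} ω^j ‖∂_ω^j φ_ω - ∂_ω^j(ω^{1/6} δ₀)‖_{l²_{10}} ≤ C ω^{-5/6}` and
`∑_{j=0}^{2} ω^j ‖P₀⊥ ∂_ω^j φ_ω‖_{l²_{10}} ≤ C ω^{-5/6}` hold (note
`∂_ω(ω^{1/6}δ₀) = (1/6)ω^{-5/6}δ₀` and `∂_ω²(ω^{1/6}δ₀) = -(5/36)ω^{-11/6}δ₀`). -/
structure SolitonFamily (ω₀ C : ℝ) : Type where
  Φ : ℝ → L2R
  Φ' : ℝ → L2R
  Φ'' : ℝ → L2R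
  hasDeriv1 : ∀ ω ∈ Set.Ioi ω₀, HasDerivAt Φ (Φ' ω) ω
  hasDeriv2 : ∀ ω ∈ Set.Ioi ω₀, HasDerivAt Φ' (Φ'' ω) ω
  contDeriv2 : ContinuousOn Φ'' (Set.Ioi ω₀)
  eqn : ∀ ω ∈ Set.Ioi ω₀, ∀ x : ℤ,
    0 = -(lapR (fun y => wt (-10) y * Φ ω y) x) + ω * (wt (-10) x * Φ ω x)
        - |wt (-10) x * Φ ω x| ^ 6 * (wt (-10) x * Φ ω x)
  approx : ∀ ω ∈ Set.Ioi ω₀,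
      ‖Φ ω - (ω ^ ((1 : ℝ) / 6)) • e0R‖
    + ω * ‖Φ' ω - ((1 / 6 : ℝ) * ω ^ (-(5 : ℝ) / 6)) • e0R‖
    + ω ^ 2 * ‖Φ'' ω - ((-5 / 36 : ℝ) * ω ^ (-(11 : ℝ) / 6)) • e0R‖
      ≤ C * ω ^ (-(5 : ℝ) / 6)
  perp : ∀ ω ∈ Set.Ioi ω₀,
      ‖P0R (Φ ω)‖ + ω * ‖P0R (Φ' ω)‖ + ω ^ 2 * ‖P0R (Φ'' ω)‖ ≤ C * ω ^ (-(5 : ℝ) / 6)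

namespace SolitonFamily
variable {ω₀ C : ℝ} (sf : SolitonFamily ω₀ C)

/-- The soliton `φ_ω` as a raw real sequence. -/
def phiF (ω : ℝ) : ℤ → ℝ := fun x => wt (-10) x * sf.Φ ω x
/-- `∂_ω φ_ω` as a raw real sequence. -/
def dphiF (ω : ℝ) : ℤ → ℝ := fun x => wt (-10) x * sf.Φ' ω x
/-- `∂²_ω φ_ω` as a raw real sequence. -/
def d2phiF (ω : ℝ) : ℤ → ℝ := fun x => wt (-10) x * sf.Φ'' ω x
/-- `φ[θ,ω] = e^{iθ} φ_ω`. -/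
def phiC (θ ω : ℝ) : ℤ → ℂ := fun x => Complex.exp (Complex.I * θ) * (sf.phiF ω x : ℂ)
/-- `∂_θ φ[θ,ω] = i e^{iθ} φ_ω`. -/
def dthphiC (θ ω : ℝ) : ℤ → ℂ :=
  fun x => Complex.I * Complex.exp (Complex.I * θ) * (sf.phiF ω x : ℂ)
/-- `∂_ω φ[θ,ω] = e^{iθ} ∂_ω φ_ω`. -/
def dOmphiC (θ ω : ℝ) : ℤ → ℂ := fun x => Complex.exp (Complex.I * θ) * (sf.dphiF ω x : ℂ)

end SolitonFamily

/-- The real inner product `⟨u,v⟩ = Re ∑_x u(x) conj(v(x))`. -/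
def rip (u v : ℤ → ℂ) : ℝ := ∑' x : ℤ, (u x * (starRingEnd ℂ) (v x)).re

/-- The symplectic form `Ω(u,v) = ⟨iu, v⟩`. -/
def Om (u v : ℤ → ℂ) : ℝ := rip (fun x => Complex.I * u x) v

namespace SolitonFamily
variable {ω₀ C : ℝ} (sf : SolitonFamily ω₀ C)

/-- `H_c[θ,ω] = {u ∈ ℓ² : Ω(u, ∂_θφ[θ,ω]) = Ω(u, ∂_ωφ[θ,ω]) = 0}`. -/
def Hc (θ ω : ℝ) : Set L2 :=
  {v : L2 | Om (fun x => v x) (sf.dthphiC θ ω) = 0 ∧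
            Om (fun x => v x) (sf.dOmphiC θ ω) = 0}

/-- The tube `T_{ω*}(r) = {u : inf_θ ‖u - φ[θ,ω*]‖_{l²} < r}` around the soliton orbit. -/
def Tset (ωs r : ℝ) : Set L2 :=
  {u : L2 | (⨅ θ : ℝ, el2 (fun x => u x - sf.phiC θ ωs x)) < ENNReal.ofReal r}

end SolitonFamily

/-- `u` is a `C¹` solution of DNLS `i ∂_t u = -Δ_d u - |u|⁶ u` on the time set `S`,
with derivative `u'`. -/
def IsDNLS (u u' : ℝ → L2) (S : Set ℝ) : Prop :=
  ContinuousOn u' S ∧ ∀ t ∈ S, HasDerivWithinAt u (u' t) S t ∧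
    ∀ x : ℤ, Complex.I * (u' t) x
      = -(lapC (fun y => (u t) y) x) - (‖(u t) x‖ : ℂ) ^ 6 * (u t) x

/-- The modulation remainder `ξ(t) = u(t) - φ[θ(t),ω(t)]` as a raw sequence. -/
def xiF {ω₀ C : ℝ} (sf : SolitonFamily ω₀ C) (u : ℝ → L2) (θ ω : ℝ → ℝ) (t : ℝ) :
    ℤ → ℂ := fun x => u t x - sf.phiC (θ t) (ω t) x

/-- `η(t) = P₀⊥ ξ(t)` as a raw sequence. -/
def etaF {ω₀ C : ℝ} (sf : SolitonFamily ω₀ C) (u : ℝ → L2) (θ ω : ℝ → ℝ) (t : ℝ) :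
    ℤ → ℂ := fun x => if x = 0 then 0 else xiF sf u θ ω t x

/-- The scalar coefficient appearing in the inverse `Q[θ,ω]` of `P₀⊥|_{H_c[θ,ω]}`. -/
def Qcoef {ω₀ C : ℝ} (sf : SolitonFamily ω₀ C) (θ ω : ℝ) (u : L2) : ℂ :=
  Complex.exp (Complex.I * θ) *
    (((-(sf.phiF ω 0)⁻¹ * Om (fun x => u x) (sf.dthphiC θ ω) : ℝ) : ℂ)
      + Complex.I * (((sf.dphiF ω 0)⁻¹ * Om (fun x => u x) (sf.dOmphiC θ ω) : ℝ) : ℂ))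

/-- The map `Q[θ,ω] u = u + e^{iθ}(-φ_ω(0)⁻¹ Ω(u,∂_θφ) + i (∂_ωφ_ω(0))⁻¹ Ω(u,∂_ωφ)) δ₀`. -/
def Qmap {ω₀ C : ℝ} (sf : SolitonFamily ω₀ C) (θ ω : ℝ) (u : L2) : L2 :=
  u + lp.single 2 (0 : ℤ) (Qcoef sf θ ω u)

/-- The (ℝ-linear) linearized operator
`H[θ,ω]u = -Δ_d u - 4|φ[θ,ω]|⁶ u - 3|φ[θ,ω]|⁴ φ[θ,ω]² conj(u)`. -/
def Hop {ω₀ C : ℝ} (sf : SolitonFamily ω₀ C) (θ ω : ℝ) (u : ℤ → ℂ) : ℤ → ℂ :=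
  fun x => -(lapC u x) - 4 * (‖sf.phiC θ ω x‖ : ℂ) ^ 6 * u x
    - 3 * (‖sf.phiC θ ω x‖ : ℂ) ^ 4 * (sf.phiC θ ω x) ^ 2 * (starRingEnd ℂ) (u x)

/-- The soliton of the appendix (anti-continuous limit) construction:
`φ_ω = ω^{1/6}((1 + ω⁻¹ψ₀(ω⁻¹))δ₀ + ∑_{j≥1} ω^{-j} ψ_j(ω⁻¹)(δ_j + δ_{-j}))`. -/
def phiOf (ψ : ℝ → LinfN) (ω : ℝ) : ℤ → ℝ :=
  fun x => ω ^ ((1 : ℝ) / 6) *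
    (if x = 0 then 1 + ω⁻¹ * ψ ω⁻¹ 0
     else ω ^ (-(x.natAbs : ℝ)) * ψ ω⁻¹ x.natAbs)


/-! ## Auxiliary lemmas for the resolvent bound -/

lemma absnat' (n : ℕ) : |((n : ℤ) : ℝ)| = (n : ℝ) := by
  rw [Int.cast_natCast]; exact _root_.abs_of_nonneg (Nat.cast_nonneg n)

lemma sumexp' (c : ℝ) (hc : 0 < c) :
    Summable (fun y : ℤ => Real.exp (-(c * |(y : ℝ)|))) := by
  set f : ℤ → ℝ := fun y : ℤ => Real.exp (-(c * |(y : ℝ)|)) with hf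
  have hgeo : Summable (fun n : ℕ => Real.exp (-c) ^ n) :=
    summable_geometric_of_lt_one (Real.exp_nonneg _)
      (Real.exp_lt_one_iff.2 (by linarith))
  have hnat : Summable (fun n : ℕ => f n) := by
    refine hgeo.congr fun n => ?_
    rw [hf, ← Real.exp_nat_mul]
    simp only []
    rw [absnat']
    ring_nf
  have hneg : Summable (fun n : ℕ => f (-(n : ℤ))) := by
    refine hnat.congr fun n => ?_
    rw [hf]
    simp only []
    push_cast
    rw [_root_.abs_neg]
  exact Summable.of_nat_of_neg hnat hneg

lemma sumS2' : Summable (fun x : ℤ => (|(x : ℝ)| * Real.exp (-|(x : ℝ)|)) ^ 2) := by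
  have h := sumexp' (1/2) (by norm_num)
  refine (h.mul_left 4).of_nonneg_of_le (fun x => by positivity) (fun x => ?_)
  set t := |(x : ℝ)| with ht
  have ht0 : 0 ≤ t := abs_nonneg _
  have h1 : t ≤ 2 * Real.exp (t / 2) := by
    have := Real.add_one_le_exp (t / 2)
    nlinarith [Real.exp_pos (t/2)]
  have h2 : t * Real.exp (-t) ≤ 2 * Real.exp (-(t/2)) := by
    have hmul : t * Real.exp (-t) * Real.exp (t) = t := by
      rw [mul_assoc, ← Real.exp_add]; simp
    have hmul2 : (2 * Real.exp (-(t/2))) * Real.exp t = 2 * Real.exp (t/2) := by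
      rw [mul_assoc, ← Real.exp_add]; congr 2; ring
    have hep := Real.exp_pos t
    calc t * Real.exp (-t) = (t * Real.exp (-t) * Real.exp t) / Real.exp t := by field_simp
      _ = t / Real.exp t := by rw [hmul]
      _ ≤ (2 * Real.exp (t/2)) / Real.exp t := by gcongr
      _ = (2 * Real.exp (-(t/2)) * Real.exp t) / Real.exp t := by rw [hmul2]
      _ = 2 * Real.exp (-(t/2)) := by field_simp
  calc (t * Real.exp (-t)) ^ 2 ≤ (2 * Real.exp (-(t/2))) ^ 2 := by
        apply pow_le_pow_left₀ (by positivity) h2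
    _ = 4 * (Real.exp (-(t/2)) * Real.exp (-(t/2))) := by ring
    _ = 4 * Real.exp (-t) := by rw [← Real.exp_add]; ring_nf
    _ ≤ 4 * Real.exp (-(1/2 * t)) := by
        have : Real.exp (-t) ≤ Real.exp (-(1/2 * t)) := Real.exp_le_exp.2 (by linarith)
        linarith

/-- the sum `S1 = ∑ e^{-|y|}`. -/
def S1c : ℝ := ∑' y : ℤ, Real.exp (-(1 * |(y : ℝ)|))
/-- the sum `S2 = ∑ (|x| e^{-|x|})²`. -/
def S2c : ℝ := ∑' x : ℤ, (|(x : ℝ)| * Real.exp (-|(x : ℝ)|)) ^ 2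

lemma S1c_nonneg : 0 ≤ S1c := tsum_nonneg (fun _ => (Real.exp_pos _).le)
lemma S2c_nonneg : 0 ≤ S2c := tsum_nonneg (fun _ => sq_nonneg _)

/-- choice of the root of `z + 1/z = 2 - λ` inside the unit disc. -/
lemma exZ (lam : ℂ) (h : lam.im ≠ 0) :
    ∃ z : ℂ, z ≠ 0 ∧ ‖z‖ < 1 ∧ z + z⁻¹ = 2 - lam := by
  obtain ⟨w, hw⟩ := IsAlgClosed.exists_pow_nat_eq ((2 - lam) ^ 2 - 4) zero_lt_two
  set z0 : ℂ := ((2 - lam) + w) / 2 with hz0def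
  set z1 : ℂ := ((2 - lam) - w) / 2 with hz1def
  have hprod : z0 * z1 = 1 := by
    rw [hz0def, hz1def]; field_simp; linear_combination -hw
  have hz0ne : z0 ≠ 0 := by
    intro h0; rw [h0, zero_mul] at hprod; exact one_ne_zero hprod.symm
  have hz1inv : z1 = z0⁻¹ := eq_inv_of_mul_eq_one_right hprod
  have hsum : z0 + z0⁻¹ = 2 - lam := by rw [← hz1inv, hz0def, hz1def]; ring
  have habs : ‖z0‖ ≠ 1 := by
    intro h1
    have hconj : z0⁻¹ = (starRingEnd ℂ) z0 := Complex.inv_eq_conj (by simpa using h1)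
    have him := congrArg Complex.im hsum
    rw [hconj] at him
    simp [Complex.add_im, Complex.conj_im, Complex.sub_im] at him
    exact h him
  rcases lt_or_gt_of_ne habs with hlt | hgt
  · exact ⟨z0, hz0ne, hlt, hsum⟩
  · refine ⟨z0⁻¹, inv_ne_zero hz0ne, ?_, ?_⟩
    · rw [norm_inv]; exact inv_lt_one_of_one_lt₀ hgt
    · rw [inv_inv, add_comm]; exact hsum

/-- the key series representation `v(x+1) - z v(x) = ∑_{k≥1} z^k u(x+k)`. -/
lemma keyA (z : ℂ) (hz0 : z ≠ 0) (hz1 : ‖z‖ < 1) (v u : ℤ → ℂ) (B : ℝ)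
    (hbd : ∀ x, ‖v x‖ ≤ B) (hsum : Summable fun y : ℤ => ‖u y‖)
    (hkey : ∀ x : ℤ, v (x + 1) + v (x - 1) = (z + z⁻¹) * v x - u x) (x : ℤ) :
    HasSum (fun k : ℕ => z ^ (k + 1) * u (x + k + 1)) (v (x + 1) - z * v x) := by
  have hz1' : ‖z‖ ≤ 1 := hz1.le
  have hzz : z * z⁻¹ = 1 := mul_inv_cancel₀ hz0
  have hstep : ∀ y : ℤ, v (y + 1) - z * v y
      = z * (v (y + 1 + 1) - z * v (y + 1)) + z * u (y + 1) := by
    intro y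
    have h := hkey (y + 1)
    rw [show y + 1 - 1 = y from by ring] at h
    linear_combination (-z) * h - (v (y+1)) * hzz
  have hpart : ∀ n : ℕ, v (x + 1) - z * v x
      = z ^ n * (v (x + n + 1) - z * v (x + n))
        + ∑ k ∈ Finset.range n, z ^ (k + 1) * u (x + k + 1) := by
    intro n
    induction n with
    | zero => simp
    | succ n ih =>
      rw [ih, Finset.sum_range_succ, hstep (x + n)]
      rw [show x + (n:ℤ) + 1 + 1 = x + ((n:ℕ)+1:ℕ) + 1 from by push_cast; ring,
          show x + (n:ℤ) + 1 = x + ((n:ℕ)+1:ℕ) from by push_cast; ring]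
      ring
  have hinj : Function.Injective (fun k : ℕ => x + k + 1) := by
    intro a b hab
    simp only [add_left_inj, add_right_inj, Nat.cast_inj] at hab
    exact hab
  have hsumc : Summable (fun k : ℕ => ‖u (x + k + 1)‖) := hsum.comp_injective hinj
  have hsable : Summable (fun k : ℕ => z ^ (k + 1) * u (x + k + 1)) := by
    apply Summable.of_norm
    refine hsumc.of_nonneg_of_le (fun k => norm_nonneg _) (fun k => ?_)
    rw [norm_mul]
    calc ‖z ^ (k+1)‖ * ‖u (x + k + 1)‖ ≤ 1 * ‖u (x + k + 1)‖ := by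
          apply mul_le_mul_of_nonneg_right _ (norm_nonneg _)
          rw [norm_pow]
          exact pow_le_one₀ (norm_nonneg _) hz1'
      _ = ‖u (x + k + 1)‖ := one_mul _
  have hrem : Tendsto (fun n : ℕ => z ^ n * (v (x + n + 1) - z * v (x + n)))
      atTop (nhds 0) := by
    apply squeeze_zero_norm (a := fun n : ℕ => (B + B) * ‖z‖ ^ n)
    · intro n
      rw [norm_mul, norm_pow]
      calc ‖z‖ ^ n * ‖v (x + n + 1) - z * v (x + n)‖
          ≤ ‖z‖ ^ n * (B + B) := by
            apply mul_le_mul_of_nonneg_left _ (by positivity)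
            calc ‖v (x + n + 1) - z * v (x + n)‖ ≤ ‖v (x + n + 1)‖ + ‖z * v (x + n)‖ :=
                  norm_sub_le _ _
              _ ≤ B + B := by
                  refine add_le_add (hbd _) ?_
                  rw [norm_mul]
                  calc ‖z‖ * ‖v (x + n)‖ ≤ 1 * B := by
                        apply mul_le_mul hz1' (hbd _) (norm_nonneg _) zero_le_one
                    _ = B := one_mul _
        _ = (B + B) * ‖z‖ ^ n := by ring
    · rw [show (0:ℝ) = (B + B) * 0 from by ring]
      exact (tendsto_pow_atTop_nhds_zero_of_lt_one (norm_nonneg z) hz1).const_mul _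
  have h1 : Tendsto (fun n : ℕ => ∑ k ∈ Finset.range n, z ^ (k + 1) * u (x + k + 1))
      atTop (nhds (∑' k : ℕ, z ^ (k + 1) * u (x + k + 1))) :=
    hsable.hasSum.tendsto_sum_nat
  have h2 : Tendsto (fun n : ℕ => ∑ k ∈ Finset.range n, z ^ (k + 1) * u (x + k + 1))
      atTop (nhds (v (x + 1) - z * v x)) := by
    have heq2 : (fun n : ℕ => ∑ k ∈ Finset.range n, z ^ (k + 1) * u (x + k + 1))
        = fun n : ℕ => (v (x + 1) - z * v x) - z ^ n * (v (x + n + 1) - z * v (x + n)) := by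
      funext n
      rw [hpart n]; ring
    rw [heq2]
    simpa using tendsto_const_nhds.sub hrem
  have := tendsto_nhds_unique h1 h2
  exact this ▸ hsable.hasSum

lemma el2w_pointwise' {a : ℝ} {u : ℤ → ℂ} (h : el2w a u ≤ 1) (x : ℤ) :
    ‖u x‖ * wt a x ≤ 1 := by
  rw [el2w] at h
  set T := ∑' x : ℤ, ((‖u x‖₊ : ℝ≥0∞) * ENNReal.ofReal (wt a x)) ^ (2 : ℕ) with hT
  have hT1 : T ≤ 1 := by
    have h2 := ENNReal.rpow_le_rpow h (by norm_num : (0:ℝ) ≤ 2)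
    rwa [← ENNReal.rpow_mul, show (1:ℝ)/2 * 2 = 1 by norm_num, ENNReal.rpow_one,
      ENNReal.one_rpow] at h2
  have hterm : ((‖u x‖₊ : ℝ≥0∞) * ENNReal.ofReal (wt a x)) ^ (2 : ℕ) ≤ 1 :=
    le_trans (ENNReal.le_tsum x) hT1
  have hbase : (‖u x‖₊ : ℝ≥0∞) * ENNReal.ofReal (wt a x) ≤ 1 := by
    by_contra hc
    push_neg at hc
    have := one_lt_pow₀ hc (two_ne_zero)
    exact absurd hterm (not_le.2 this)
  rw [← (fun c : ℂ => (show ENNReal.ofReal ‖c‖ = (‖c‖₊ : ℝ≥0∞) by exact ofReal_norm c)), ← ENNReal.ofReal_mul (norm_nonneg _)] at hbase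
  exact ENNReal.ofReal_le_one.1 hbase

lemma el2w_final' (v : ℤ → ℂ) (M : ℝ) (hM : 0 ≤ M)
    (hb : ∀ x : ℤ, ‖v x‖ ≤ M * |(x : ℝ)|) :
    el2w (-1) v ≤ ENNReal.ofReal ((M + 1) * (Real.sqrt S2c + 1)) := by
  set K := (M + 1) * (Real.sqrt S2c + 1) with hK
  have hS2nn : 0 ≤ S2c := S2c_nonneg
  have hKnn : 0 ≤ K := by positivity
  rw [el2w]
  have hterm : ∀ x : ℤ, ((‖v x‖₊ : ℝ≥0∞) * ENNReal.ofReal (wt (-1) x)) ^ (2 : ℕ)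
      ≤ ENNReal.ofReal (M ^ 2 * (|(x : ℝ)| * Real.exp (-|(x : ℝ)|)) ^ 2) := by
    intro x
    have hwt : wt (-1) x = Real.exp (-|(x : ℝ)|) := by rw [wt]; ring_nf
    rw [hwt, ← (fun c : ℂ => (show ENNReal.ofReal ‖c‖ = (‖c‖₊ : ℝ≥0∞) by exact ofReal_norm c)), ← ENNReal.ofReal_mul (norm_nonneg _),
      ← ENNReal.ofReal_pow (by positivity)]
    apply ENNReal.ofReal_le_ofReal
    calc (‖v x‖ * Real.exp (-|(x : ℝ)|)) ^ 2
        ≤ (M * |(x : ℝ)| * Real.exp (-|(x : ℝ)|)) ^ 2 := by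
          apply pow_le_pow_left₀ (by positivity)
          exact mul_le_mul_of_nonneg_right (hb x) (Real.exp_pos _).le
      _ = M ^ 2 * (|(x : ℝ)| * Real.exp (-|(x : ℝ)|)) ^ 2 := by ring
  have hsum2 : Summable (fun x : ℤ => M ^ 2 * (|(x : ℝ)| * Real.exp (-|(x : ℝ)|)) ^ 2) :=
    sumS2'.mul_left _
  calc (∑' x : ℤ, ((‖v x‖₊ : ℝ≥0∞) * ENNReal.ofReal (wt (-1) x)) ^ (2 : ℕ)) ^ ((1:ℝ)/2)
      ≤ (∑' x : ℤ, ENNReal.ofReal (M ^ 2 * (|(x : ℝ)| * Real.exp (-|(x : ℝ)|)) ^ 2)) ^ ((1:ℝ)/2) :=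
        ENNReal.rpow_le_rpow (ENNReal.tsum_le_tsum hterm) (by norm_num)
    _ = (ENNReal.ofReal (∑' x : ℤ, M ^ 2 * (|(x : ℝ)| * Real.exp (-|(x : ℝ)|)) ^ 2)) ^ ((1:ℝ)/2) := by
        rw [ENNReal.ofReal_tsum_of_nonneg (fun x => by positivity) hsum2]
    _ = (ENNReal.ofReal (M ^ 2 * S2c)) ^ ((1:ℝ)/2) := by rw [tsum_mul_left, S2c]
    _ ≤ (ENNReal.ofReal (K ^ 2)) ^ ((1:ℝ)/2) := by
        apply ENNReal.rpow_le_rpow _ (by norm_num)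
        apply ENNReal.ofReal_le_ofReal
        nlinarith [Real.sq_sqrt hS2nn, Real.sqrt_nonneg S2c]
    _ = ENNReal.ofReal K := by
        rw [ENNReal.ofReal_rpow_of_nonneg (by positivity) (by norm_num)]
        congr 1
        rw [← Real.rpow_natCast K 2, ← Real.rpow_mul hKnn]
        norm_num


/-- **Uniform weighted resolvent bound on odd functions**: for `Im λ ≠ 0` and odd `u`
with `‖u‖_{l²_1} ≤ 1`, the solution `v` of `(-Δ_d - λ)v = u` satisfies
`‖v‖_{l²_{-1}} ≤ K`, with `K` independent of `λ` and `u`. -/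
theorem resolvent_bound_odd :
    ∃ K : ℝ, 0 < K ∧ ∀ lam : ℂ, lam.im ≠ 0 →
      ∀ u v : L2,
        (∀ x : ℤ, u (-x) = -u x) →
        el2w 1 (fun x => u x) ≤ 1 →
        (∀ x : ℤ, -(DeltaD v) x - lam * v x = u x) →
        el2w (-1) (fun x => v x) ≤ ENNReal.ofReal K := by
  classical
  refine ⟨(S1c + 1) * (Real.sqrt S2c + 1), ?_, ?_⟩
  · have h1 : (0:ℝ) < S1c + 1 := by linarith [S1c_nonneg]
    have h2 : (0:ℝ) < Real.sqrt S2c + 1 := by positivity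
    exact mul_pos h1 h2
  intro lam hlam u v hodd hu1 heq
  obtain ⟨z, hz0, hz1, hzsum⟩ := exZ lam hlam
  have hzz : z * z⁻¹ = 1 := mul_inv_cancel₀ hz0
  -- pointwise bound on u
  have hub : ∀ y : ℤ, ‖u y‖ ≤ Real.exp (-(1 * |(y : ℝ)|)) := by
    intro y
    have h := el2w_pointwise' hu1 y
    have hwt : wt 1 y = Real.exp (1 * |(y:ℝ)|) := rfl
    simp only [] at h
    rw [hwt] at h
    calc ‖u y‖ = ‖u y‖ * Real.exp (1*|(y:ℝ)|) * (Real.exp (1*|(y:ℝ)|))⁻¹ := by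
          field_simp
      _ ≤ 1 * (Real.exp (1*|(y:ℝ)|))⁻¹ := by
          apply mul_le_mul_of_nonneg_right h (by positivity)
      _ = Real.exp (-(1*|(y:ℝ)|)) := by rw [one_mul, Real.exp_neg]
  have husum : Summable (fun y : ℤ => ‖u y‖) :=
    (sumexp' 1 one_pos).of_nonneg_of_le (fun y => norm_nonneg _) hub
  have huS1 : (∑' y : ℤ, ‖u y‖) ≤ S1c :=
    Summable.tsum_le_tsum hub husum (sumexp' 1 one_pos)
  -- the second-order recurrence
  have hkey : ∀ x : ℤ, v (x + 1) + v (x - 1) = (z + z⁻¹) * v x - u x := by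
    intro x
    have h := heq x
    rw [DeltaD_apply] at h
    linear_combination -h - ((v x : ℂ)) * hzsum
  have hbd : ∀ x : ℤ, ‖v x‖ ≤ ‖v‖ :=
    fun x => lp.norm_apply_le_norm (by norm_num) v x
  -- forward series representation
  have ha : ∀ x : ℤ, HasSum (fun k : ℕ => z ^ (k+1) * u (x + k + 1))
      (v (x+1) - z * v x) :=
    keyA z hz0 hz1 (fun x => v x) (fun x => u x) ‖v‖ hbd husum hkey
  -- backward series representation
  have hb : ∀ x : ℤ, HasSum (fun k : ℕ => z ^ (k+1) * u (-(x + k + 1)))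
      (v (-(x+1)) - z * v (-x)) := by
    intro x
    refine keyA z hz0 hz1 (fun y => v (-y)) (fun y => u (-y)) ‖v‖
      (fun y => hbd _) (husum.comp_injective neg_injective) ?_ x
    intro y
    have h := hkey (-y)
    rw [show -y + 1 = -(y - 1) from by ring, show -y - 1 = -(y + 1) from by ring] at h
    linear_combination h
  -- uniform bound on the series sums
  have hS1b : ∀ (i : ℕ → ℤ), Function.Injective i → ∀ L : ℂ,
      HasSum (fun k : ℕ => z ^ (k+1) * u (i k)) L → ‖L‖ ≤ S1c := by
    intro i hi L hL
    have hsumi : Summable (fun k : ℕ => ‖u (i k)‖) := husum.comp_injective hi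
    have hle : ∀ k : ℕ, ‖z ^ (k+1) * u (i k)‖ ≤ ‖u (i k)‖ := by
      intro k
      rw [norm_mul, norm_pow]
      calc ‖z‖ ^ (k+1) * ‖u (i k)‖ ≤ 1 * ‖u (i k)‖ :=
            mul_le_mul_of_nonneg_right (pow_le_one₀ (norm_nonneg _) hz1.le) (norm_nonneg _)
        _ = ‖u (i k)‖ := one_mul _
    have hsumz : Summable (fun k : ℕ => ‖z ^ (k+1) * u (i k)‖) :=
      hsumi.of_nonneg_of_le (fun k => norm_nonneg _) hle
    rw [← hL.tsum_eq]
    calc ‖∑' k : ℕ, z ^ (k+1) * u (i k)‖ ≤ ∑' k : ℕ, ‖z ^ (k+1) * u (i k)‖ :=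
          norm_tsum_le_tsum_norm hsumz
      _ ≤ ∑' k : ℕ, ‖u (i k)‖ := Summable.tsum_le_tsum hle hsumz hsumi
      _ ≤ ∑' y : ℤ, ‖u y‖ :=
          Summable.tsum_le_tsum_of_inj i hi (fun c _ => norm_nonneg _) (fun k => le_rfl) hsumi husum
      _ ≤ S1c := huS1
  -- u 0 = 0
  have hU0 : (u 0 : ℂ) = 0 := by
    have h := hodd 0
    rw [neg_zero] at h
    linear_combination h / 2
  -- v 0 = 0
  have hA' : HasSum (fun k : ℕ => z ^ (k+1) * u (k : ℤ)) ((v 0 : ℂ) - z * v (-1)) := by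
    have h := ha (-1)
    rw [show ((-1:ℤ)+1) = 0 from by ring] at h
    have hfun : (fun k : ℕ => z ^ (k+1) * (u ((-1:ℤ) + k + 1) : ℂ))
        = fun k : ℕ => z ^ (k+1) * u (k : ℤ) := by
      funext k
      rw [show ((-1:ℤ) + (k:ℤ) + 1) = (k:ℤ) from by ring]
    rwa [hfun] at h
  have hB' : HasSum (fun k : ℕ => z ^ (k+1) * u (k : ℤ)) (-((v 0 : ℂ) - z * v 1)) := by
    have h := hb (-1)
    rw [show ((-1:ℤ)+1) = 0 from by ring, neg_zero, show -(-1:ℤ) = 1 from by ring] at h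
    have hfun : (fun k : ℕ => z ^ (k+1) * (u (-((-1:ℤ) + k + 1)) : ℂ))
        = fun k : ℕ => -(z ^ (k+1) * u (k : ℤ)) := by
      funext k
      rw [show -((-1:ℤ) + (k:ℤ) + 1) = -(k:ℤ) from by ring, hodd (k : ℤ)]
      ring
    rw [hfun] at h
    simpa using h.neg
  have huniq : (v 0 : ℂ) - z * v (-1) = -((v 0 : ℂ) - z * v 1) := hA'.unique hB'
  have hk0 := hkey 0
  rw [show (0:ℤ)+1 = 1 from by ring, show (0:ℤ)-1 = -1 from by ring] at hk0
  have hz2 : (1:ℂ) - z^2 ≠ 0 := by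
    intro hc
    have hz2' : z ^ 2 = 1 := by linear_combination -hc
    have habs : ‖z ^ 2‖ = 1 := by rw [hz2']; simp
    rw [norm_pow] at habs
    nlinarith [norm_nonneg z]
  have hv0 : (v 0 : ℂ) = 0 := by
    have hmain : ((1:ℂ) - z^2) * v 0 = 0 := by
      linear_combination huniq + z * hk0 + ((v 0 : ℂ)) * hzz - z * hU0
    rcases mul_eq_zero.1 hmain with h | h
    · exact absurd h hz2
    · exact h
  -- linear growth bound
  have haB : ∀ x : ℤ, ‖(v (x+1) : ℂ) - z * v x‖ ≤ S1c := by
    intro x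
    exact hS1b (fun k => x + k + 1) (fun a b hab => by simpa using hab) _ (ha x)
  have hbB : ∀ x : ℤ, ‖(v (-(x+1)) : ℂ) - z * v (-x)‖ ≤ S1c := by
    intro x
    refine hS1b (fun k => -(x + k + 1)) (fun a b hab => ?_) _ (hb x)
    simp only [neg_inj, add_left_inj, add_right_inj, Nat.cast_inj] at hab
    exact hab
  have hzle : ∀ w : ℂ, ‖z * w‖ ≤ ‖w‖ := by
    intro w
    rw [norm_mul]
    calc ‖z‖ * ‖w‖ ≤ 1 * ‖w‖ := mul_le_mul_of_nonneg_right hz1.le (norm_nonneg _)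
      _ = ‖w‖ := one_mul _
  have hvbound : ∀ x : ℤ, ‖(v x : ℂ)‖ ≤ S1c * |(x:ℝ)| := by
    intro x
    induction x using Int.induction_on with
    | zero => rw [hv0]; simp
    | succ n ih =>
      have h1 := haB (n : ℤ)
      have h2 : ‖(v ((n:ℤ)+1) : ℂ)‖ ≤ ‖(v (n:ℤ) : ℂ)‖ + S1c := by
        calc ‖(v ((n:ℤ)+1) : ℂ)‖
            = ‖z * v (n:ℤ) + ((v ((n:ℤ)+1) : ℂ) - z * v (n:ℤ))‖ := by congr 1; ring
          _ ≤ ‖z * (v (n:ℤ) : ℂ)‖ + ‖(v ((n:ℤ)+1) : ℂ) - z * v (n:ℤ)‖ := norm_add_le _ _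
          _ ≤ ‖(v (n:ℤ) : ℂ)‖ + S1c := add_le_add (hzle _) h1
      push_cast at ih ⊢
      rw [_root_.abs_of_nonneg (by positivity : (0:ℝ) ≤ (n:ℝ) + 1)]
      rw [_root_.abs_of_nonneg (by positivity : (0:ℝ) ≤ (n:ℝ))] at ih
      linarith
    | pred n ih =>
      have h1 := hbB (n : ℤ)
      rw [show -((n:ℤ)+1) = -(n:ℤ) - 1 from by ring] at h1
      have h2 : ‖(v (-(n:ℤ)-1) : ℂ)‖ ≤ ‖(v (-(n:ℤ)) : ℂ)‖ + S1c := by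
        calc ‖(v (-(n:ℤ)-1) : ℂ)‖
            = ‖z * v (-(n:ℤ)) + ((v (-(n:ℤ)-1) : ℂ) - z * v (-(n:ℤ)))‖ := by congr 1; ring
          _ ≤ ‖z * (v (-(n:ℤ)) : ℂ)‖ + ‖(v (-(n:ℤ)-1) : ℂ) - z * v (-(n:ℤ))‖ := norm_add_le _ _
          _ ≤ ‖(v (-(n:ℤ)) : ℂ)‖ + S1c := add_le_add (hzle _) h1
      push_cast at ih ⊢
      rw [show -(n:ℝ) - 1 = -((n:ℝ)+1) from by ring, _root_.abs_neg,
        _root_.abs_of_nonneg (by positivity : (0:ℝ) ≤ (n:ℝ) + 1)]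
      rw [_root_.abs_neg, _root_.abs_of_nonneg (by positivity : (0:ℝ) ≤ (n:ℝ))] at ih
      linarith
  exact el2w_final' (fun x => v x) S1c S1c_nonneg hvbound


end
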